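/- Consider the scalar ODE ż = (a − z)·z·ln z with constant a > 1, z(0) ≥ a. Then z(t) ≥ a for all t ≥ 0 and 0 ≤ z(t) − a ≤ (z(0) − a)e^{−(a ln a)t} for all t ≥ 0; in particular z(t) → a at rate at least a·ln a. -/
import Mathlib


open Real Filter

theorem stmt_8 (a : ℝ) (ha : 1 < a) (z : ℝ → ℝ)
    (hz : ∀ t ≥ (0:ℝ), HasDerivAt z ((a - z t) * z t * Real.log (z t)) t)
    (hz0 : a ≤ z 0) :
    (∀ t ≥ (0:ℝ), a ≤ z t) ∧
    (∀ t ≥ (0:ℝ), 0 ≤ z t - a ∧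
      z t - a ≤ (z 0 - a) * Real.exp (-(a * Real.log a) * t)) := by
  have hcz : ∀ t : ℝ, 0 ≤ t → ContinuousAt z t := fun t ht =>
    (hz t ht).differentiableAt.continuousAt
  set θ : ℝ := (1 + a) / 2 with hθdef
  have hθ1 : 1 < θ := by rw [hθdef]; linarith
  have hθa : θ < a := by rw [hθdef]; linarith
  have hθ0 : (0:ℝ) < θ := by linarith
  -- main contradiction lemma: z cannot go below `a` while staying above `θ`
  have main : ∀ T, 0 ≤ T → z T < a → (∀ s ∈ Set.Icc (0:ℝ) T, θ ≤ z s) → False := by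
    intro T hT hzT hlow
    have hczIcc : ContinuousOn z (Set.Icc (0:ℝ) T) := fun x hx =>
      (hcz x hx.1).continuousWithinAt
    -- the set of times where z ≥ a
    set A : Set ℝ := {t ∈ Set.Icc (0:ℝ) T | a ≤ z t} with hA
    have hAclosed : IsClosed A := by
      have : A = Set.Icc (0:ℝ) T ∩ z ⁻¹' Set.Ici a := rfl
      rw [this]
      exact ContinuousOn.preimage_isClosed_of_isClosed hczIcc isClosed_Icc isClosed_Ici
    have hAne : A.Nonempty := ⟨0, ⟨le_refl _, hT⟩, hz0⟩
    have hAbdd : BddAbove A := ⟨T, fun x hx => hx.1.2⟩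
    set t₁ : ℝ := sSup A with ht₁
    have ht₁mem : t₁ ∈ A := hAclosed.csSup_mem hAne hAbdd
    have ht₁0 : 0 ≤ t₁ := ht₁mem.1.1
    have ht₁T : t₁ ≤ T := ht₁mem.1.2
    have ht₁lt : t₁ < T := by
      rcases lt_or_eq_of_le ht₁T with h | h
      · exact h
      · exact absurd (h ▸ ht₁mem.2) (not_le.2 hzT)
    -- beyond t₁, z < a
    have hafter : ∀ x, t₁ < x → x ≤ T → z x < a := by
      intro x hx hxT
      by_contra h
      push_neg at h
      have : x ∈ A := ⟨⟨ht₁0.trans hx.le, hxT⟩, h⟩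
      exact absurd (le_csSup hAbdd this) (not_le.2 hx)
    have hzt₁ : z t₁ = a := by
      refine le_antisymm ?_ ht₁mem.2
      have htend : Tendsto z (nhdsWithin t₁ (Set.Ioi t₁)) (nhds (z t₁)) :=
        ((hcz t₁ ht₁0).continuousWithinAt).tendsto
      refine le_of_tendsto htend ?_
      filter_upwards [Ioc_mem_nhdsGT_of_mem ⟨le_refl _, ht₁lt⟩] with x hx
      exact (hafter x hx.1 hx.2).le
    -- bound on the coefficient z * log z on [0, T]
    obtain ⟨K, hK⟩ : ∃ K, ∀ x ∈ Set.Icc (0:ℝ) T, ‖z x * Real.log (z x)‖ ≤ K := by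
      apply IsCompact.exists_bound_of_continuousOn isCompact_Icc
      intro x hx
      have hzx : z x ≠ 0 := ne_of_gt (lt_of_lt_of_le hθ0 (hlow x hx))
      exact (((hcz x hx.1).mul ((Real.continuousAt_log hzx).comp (hcz x hx.1)))).continuousWithinAt
    -- Gronwall on [t₁, T]
    have hgr := norm_le_gronwallBound_of_norm_deriv_right_le
      (f := fun t => z t - a) (f' := fun t => (a - z t) * z t * Real.log (z t))
      (δ := 0) (K := K) (ε := 0) (a := t₁) (b := T)
      (fun x hx => ((hcz x (ht₁0.trans hx.1)).continuousWithinAt).sub continuousWithinAt_const)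
      (fun x hx => ((hz x (ht₁0.trans hx.1)).sub_const a).hasDerivWithinAt)
      (by simp [hzt₁])
      (by
        intro x hx
        have hxIcc : x ∈ Set.Icc (0:ℝ) T := ⟨ht₁0.trans hx.1, hx.2.le⟩
        have := hK x hxIcc
        show ‖(a - z x) * z x * Real.log (z x)‖ ≤ K * ‖z x - a‖ + 0
        have heq : (a - z x) * z x * Real.log (z x)
            = -((z x * Real.log (z x)) * (z x - a)) := by ring
        rw [heq, norm_neg, norm_mul, add_zero]
        exact mul_le_mul_of_nonneg_right this (norm_nonneg _))
    have := hgr T ⟨ht₁T, le_refl _⟩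
    rw [gronwallBound_ε0_δ0] at this
    have : z T - a = 0 := by
      have h0 : ‖z T - a‖ ≤ 0 := this
      have := norm_nonneg (z T - a)
      have : ‖z T - a‖ = 0 := le_antisymm h0 this
      exact norm_eq_zero.mp this
    linarith
  -- Step 1: z stays above a
  have step1 : ∀ t ≥ (0:ℝ), a ≤ z t := by
    intro T hT
    by_contra h
    push_neg at h
    by_cases hc : ∀ s ∈ Set.Icc (0:ℝ) T, θ ≤ z s
    · exact main T hT h hc
    · push_neg at hc
      obtain ⟨s₀, hs₀, hs₀θ⟩ := hc
      set S : Set ℝ := {t ∈ Set.Icc (0:ℝ) T | z t ≤ θ} with hS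
      have hczIcc : ContinuousOn z (Set.Icc (0:ℝ) T) := fun x hx =>
        (hcz x hx.1).continuousWithinAt
      have hSclosed : IsClosed S := by
        have : S = Set.Icc (0:ℝ) T ∩ z ⁻¹' Set.Iic θ := rfl
        rw [this]
        exact ContinuousOn.preimage_isClosed_of_isClosed hczIcc isClosed_Icc isClosed_Iic
      have hSne : S.Nonempty := ⟨s₀, hs₀, hs₀θ.le⟩
      have hSbdd : BddBelow S := ⟨0, fun x hx => hx.1.1⟩
      set t₂ : ℝ := sInf S with ht₂
      have ht₂mem : t₂ ∈ S := hSclosed.csInf_mem hSne hSbdd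
      have ht₂0 : 0 ≤ t₂ := ht₂mem.1.1
      have ht₂T : t₂ ≤ T := ht₂mem.1.2
      have ht₂pos : 0 < t₂ := by
        rcases lt_or_eq_of_le ht₂0 with h' | h'
        · exact h'
        · exfalso
          have : z 0 ≤ θ := h' ▸ ht₂mem.2
          linarith
      have hbefore : ∀ x, 0 ≤ x → x < t₂ → θ < z x := by
        intro x hx0 hx
        by_contra h'
        push_neg at h'
        have : x ∈ S := ⟨⟨hx0, hx.le.trans ht₂T⟩, h'⟩
        exact absurd (csInf_le hSbdd this) (not_le.2 hx)
      have hlow : ∀ s ∈ Set.Icc (0:ℝ) t₂, θ ≤ z s := by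
        intro s hs
        rcases lt_or_eq_of_le hs.2 with h' | h'
        · exact (hbefore s hs.1 h').le
        · rw [h']
          have htend : Tendsto z (nhdsWithin t₂ (Set.Iio t₂)) (nhds (z t₂)) :=
            ((hcz t₂ ht₂0).continuousWithinAt).tendsto
          refine ge_of_tendsto htend ?_
          filter_upwards [Ico_mem_nhdsLT_of_mem ⟨ht₂pos, le_refl _⟩] with x hx
          exact (hbefore x hx.1 hx.2).le
      exact main t₂ ht₂0 (lt_of_le_of_lt ht₂mem.2 hθa) hlow
  refine ⟨step1, ?_⟩
  intro t ht
  have hwt : 0 ≤ z t - a := by linarith [step1 t ht]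
  refine ⟨hwt, ?_⟩
  -- the decay estimate via the auxiliary function v s = (z s - a) * exp (c s)
  set c : ℝ := a * Real.log a with hc
  have hloga : 0 < Real.log a := Real.log_pos ha
  set v : ℝ → ℝ := fun s => (z s - a) * Real.exp (c * s) with hv
  have hvderiv : ∀ s, 0 ≤ s → HasDerivAt v
      (((a - z s) * z s * Real.log (z s)) * Real.exp (c * s)
        + (z s - a) * (Real.exp (c * s) * c)) s := by
    intro s hs
    have h1 : HasDerivAt (fun s : ℝ => Real.exp (c * s)) (Real.exp (c * s) * c) s := by
      simpa using (((hasDerivAt_id s).const_mul c).exp)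
    exact ((hz s hs).sub_const a).mul h1
  have hvmono : AntitoneOn v (Set.Icc 0 t) := by
    apply antitoneOn_of_deriv_nonpos (convex_Icc 0 t)
    · exact fun x hx => (hvderiv x hx.1).differentiableAt.continuousAt.continuousWithinAt
    · intro x hx
      rw [interior_Icc] at hx
      exact (hvderiv x hx.1.le).differentiableAt.differentiableWithinAt
    · intro x hx
      rw [interior_Icc] at hx
      rw [(hvderiv x hx.1.le).deriv]
      have hzx : a ≤ z x := step1 x hx.1.le
      have hzx1 : 1 ≤ z x := le_trans ha.le hzx
      have hlog : Real.log a ≤ Real.log (z x) :=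
        Real.log_le_log (by linarith) hzx
      have hcoef : c ≤ z x * Real.log (z x) := by
        rw [hc]
        apply mul_le_mul hzx hlog hloga.le (by linarith)
      have hexp : 0 < Real.exp (c * x) := Real.exp_pos _
      have key : ((a - z x) * z x * Real.log (z x)) * Real.exp (c * x)
          + (z x - a) * (Real.exp (c * x) * c)
          = (z x - a) * (c - z x * Real.log (z x)) * Real.exp (c * x) := by ring
      rw [key]
      apply mul_nonpos_of_nonpos_of_nonneg _ hexp.le
      apply mul_nonpos_of_nonneg_of_nonpos (by linarith) (by linarith)
  have hvle : v t ≤ v 0 := hvmono (Set.left_mem_Icc.2 ht) ⟨ht, le_refl _⟩ ht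
  have hv0 : v 0 = z 0 - a := by simp [hv]
  have hvt : v t = (z t - a) * Real.exp (c * t) := rfl
  rw [hv0, hvt] at hvle
  have hexp : (0:ℝ) < Real.exp (c * t) := Real.exp_pos _
  have : z t - a ≤ (z 0 - a) / Real.exp (c * t) := by
    rw [le_div_iff₀ hexp]; exact hvle
  calc z t - a ≤ (z 0 - a) / Real.exp (c * t) := this
    _ = (z 0 - a) * Real.exp (-(a * Real.log a) * t) := by
        rw [div_eq_mul_inv, ← Real.exp_neg, hc]; ring_nf
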